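/- For the Kac operator with uniform scattering density ρ = 1/(2π) on N particles, the function F(v) = Σ_{j=1}^N (v_j⁴ − 3N/(N+2)) on S^{N−1}(√N) satisfies L_N F = (1/2)(N+2)/(N−1) · F, where L_N = N(I − Q_N). -/

import Mathlib

open Real Finset

/-- Antiderivative check for the Kac angular integral. -/
lemma kac_hasDerivAt (a b : ℝ) (θ : ℝ) :
    HasDerivAt (fun x : ℝ =>
      (a^4+b^4) * ((1/4) * ((Real.cos x)^3 * Real.sin x)
          - (1/4) * ((Real.sin x)^3 * Real.cos x) + (3/4) * x)
      + (12*a^2*b^2) * ((1/8) * x - (1/8) * (Real.sin x * (Real.cos x)^3)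
          + (1/8) * ((Real.sin x)^3 * Real.cos x))
      + (a^3*b - a*b^3) * ((Real.sin x)^4 + (Real.cos x)^4))
      ((Real.cos θ * a - Real.sin θ * b)^4 + (Real.sin θ * a + Real.cos θ * b)^4) θ := by
  have hs := Real.hasDerivAt_sin θ
  have hc := Real.hasDerivAt_cos θ
  have H :=
    (((((hc.pow 3).mul hs).const_mul (1/4:ℝ)).sub
        (((hs.pow 3).mul hc).const_mul (1/4:ℝ))|>.add
        ((hasDerivAt_id θ).const_mul (3/4:ℝ))).const_mul (a^4+b^4)).add
      (((((hasDerivAt_id θ).const_mul (1/8:ℝ)).sub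
          ((hs.mul (hc.pow 3)).const_mul (1/8:ℝ))|>.add
          (((hs.pow 3).mul hc).const_mul (1/8:ℝ))).const_mul (12*a^2*b^2)).add
        (((hs.pow 4).add (hc.pow 4)).const_mul (a^3*b - a*b^3)))
  have pyth := Real.sin_sq_add_cos_sq θ
  refine HasDerivAt.congr_deriv (HasDerivAt.congr_of_eventuallyEq H
    (Filter.Eventually.of_forall fun x => ?_)) ?_
  · simp only [id_eq, Pi.add_apply, Pi.sub_apply, Pi.mul_apply, Pi.pow_apply]; ring
  · simp only [Pi.pow_apply, Nat.cast_ofNat]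
    linear_combination (-((3/4)*(a^4+b^4) + (3/2)*a^2*b^2)) *
    (Real.sin θ^2 + Real.cos θ^2 + 1) * pyth

/-- The basic angular integral for the Kac walk. -/
lemma kac_integral (a b : ℝ) :
    (∫ θ in (-Real.pi)..Real.pi,
      ((Real.cos θ * a - Real.sin θ * b)^4 + (Real.sin θ * a + Real.cos θ * b)^4))
      = Real.pi * ((3/2)*(a^4+b^4) + 3*(a^2*b^2)) := by
  rw [intervalIntegral.integral_eq_sub_of_hasDerivAt
    (fun θ _ => kac_hasDerivAt a b θ)
    (by apply Continuous.intervalIntegrable; continuity)]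
  simp [Real.sin_pi, Real.cos_pi]
  ring

/-- Symmetric pair-sum lemma. -/
lemma pair_sum {N : ℕ} (f : Fin N → Fin N → ℝ) (hs : ∀ i j, f i j = f j i) :
    2 * ∑ p ∈ Finset.univ.filter (fun p : Fin N × Fin N => p.1 < p.2), f p.1 p.2
      = (∑ i, ∑ j, f i j) - ∑ i, f i i := by
  classical
  have htot : (∑ i, ∑ j, f i j)
      = ∑ p : Fin N × Fin N, f p.1 p.2 := by
    rw [Fintype.sum_prod_type]
  have hsplit := Finset.sum_filter_add_sum_filter_not Finset.univ
    (fun p : Fin N × Fin N => p.1 < p.2) (fun p => f p.1 p.2)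
  have hsplit2 := Finset.sum_filter_add_sum_filter_not
    (Finset.univ.filter (fun p : Fin N × Fin N => ¬ p.1 < p.2))
    (fun p : Fin N × Fin N => p.1 = p.2) (fun p => f p.1 p.2)
  have hdiag : ∑ p ∈ (Finset.univ.filter (fun p : Fin N × Fin N => ¬ p.1 < p.2)).filter
      (fun p : Fin N × Fin N => p.1 = p.2), f p.1 p.2 = ∑ i, f i i := by
    rw [Finset.filter_filter]
    refine Finset.sum_nbij' (fun p => p.1) (fun i => (i, i)) ?_ ?_ ?_ ?_ ?_
    · intro p hp; simp
    · intro i hi; simp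
    · intro p hp
      simp only [Finset.mem_filter, Finset.mem_univ, true_and] at hp
      exact Prod.ext rfl hp.2
    · intro i hi; rfl
    · intro p hp
      simp only [Finset.mem_filter, Finset.mem_univ, true_and] at hp
      rw [← hp.2]
  have hgt : ∑ p ∈ (Finset.univ.filter (fun p : Fin N × Fin N => ¬ p.1 < p.2)).filter
      (fun p : Fin N × Fin N => ¬ p.1 = p.2), f p.1 p.2
      = ∑ p ∈ Finset.univ.filter (fun p : Fin N × Fin N => p.1 < p.2), f p.1 p.2 := by
    rw [Finset.filter_filter]
    refine Finset.sum_nbij' Prod.swap Prod.swap ?_ ?_ ?_ ?_ ?_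
    · intro p hp
      simp only [Finset.mem_filter, Finset.mem_univ, true_and,
        Prod.fst_swap, Prod.snd_swap] at hp ⊢
      exact lt_of_le_of_ne (not_lt.mp hp.1) (fun h => hp.2 h.symm)
    · intro p hp
      simp only [Finset.mem_filter, Finset.mem_univ, true_and,
        Prod.fst_swap, Prod.snd_swap] at hp ⊢
      exact ⟨not_lt.mpr (le_of_lt hp), ne_of_gt hp⟩
    · intro p hp; exact Prod.swap_swap p
    · intro p hp; exact Prod.swap_swap p
    · intro p hp; exact hs p.1 p.2
  rw [htot, ← hsplit, ← hsplit2, hdiag, hgt]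
  ring

/-- The Kac rotation `R_{i,j,θ}` acting on velocities in `ℝ^N`. -/
noncomputable def kacRot (N : ℕ) (i j : Fin N) (θ : ℝ)
    (v : EuclideanSpace ℝ (Fin N)) : EuclideanSpace ℝ (Fin N) :=
  WithLp.toLp 2 fun m =>
    if m = i then Real.cos θ * v i - Real.sin θ * v j
    else if m = j then Real.sin θ * v i + Real.cos θ * v j
    else v m

/-- The Kac operator `Q_N` with uniform scattering density `ρ = 1/(2π)`. -/
noncomputable def kacQ (N : ℕ) (F : EuclideanSpace ℝ (Fin N) → ℝ)
    (v : EuclideanSpace ℝ (Fin N)) : ℝ :=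
  ((N.choose 2 : ℝ))⁻¹ *
    ∑ p ∈ Finset.univ.filter (fun p : Fin N × Fin N => p.1 < p.2),
      (2 * Real.pi)⁻¹ * ∫ θ in (-Real.pi)..Real.pi, F (kacRot N p.1 p.2 θ v)

/-- On the sphere `Σ v_j² = N`, the function `F(v) = Σ_j (v_j⁴ - 3N/(N+2))` is an
eigenfunction of `L_N = N(I - Q_N)` with eigenvalue `(1/2)(N+2)/(N-1)`. -/
theorem kac_gap_eigenfunction (N : ℕ) (hN : 2 ≤ N)
    (v : EuclideanSpace ℝ (Fin N)) (hv : ∑ j, (v j) ^ 2 = (N : ℝ))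
    (F : EuclideanSpace ℝ (Fin N) → ℝ)
    (hF : F = fun w => ∑ j, ((w j) ^ 4 - 3 * (N : ℝ) / ((N : ℝ) + 2))) :
    (N : ℝ) * (F v - kacQ N F v)
      = (1 / 2) * (((N : ℝ) + 2) / ((N : ℝ) - 1)) * F v := by
  classical
  set c : ℝ := 3 * (N : ℝ) / ((N : ℝ) + 2) with hc
  set T : ℝ := ∑ j, (v j) ^ 4 with hT
  -- pointwise formula for F ∘ kacRot
  have hpt : ∀ (i j : Fin N), i ≠ j → ∀ θ : ℝ,
      F (kacRot N i j θ v) = F v - (v i)^4 - (v j)^4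
        + ((Real.cos θ * v i - Real.sin θ * v j)^4
          + (Real.sin θ * v i + Real.cos θ * v j)^4) := by
    intro i j hij θ
    rw [hF]
    simp only
    have : ∀ m : Fin N, ((kacRot N i j θ v m) ^ 4 - c)
        = ((v m)^4 - c)
          + ((if m = i then (Real.cos θ * v i - Real.sin θ * v j)^4 - (v i)^4 else 0)
            + (if m = j then (Real.sin θ * v i + Real.cos θ * v j)^4 - (v j)^4 else 0)) := by
      intro m
      by_cases h1 : m = i
      · subst h1; simp [kacRot, hij]
      · by_cases h2 : m = j
        · subst h2; simp [kacRot, h1]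
        · simp [kacRot, h1, h2]
    simp only [this]
    rw [Finset.sum_add_distrib, Finset.sum_add_distrib, Finset.sum_ite_eq' Finset.univ i,
      Finset.sum_ite_eq' Finset.univ j]
    simp
    ring
  -- per-pair integral
  have hint : ∀ (i j : Fin N), i ≠ j →
      (∫ θ in (-Real.pi)..Real.pi, F (kacRot N i j θ v))
        = 2 * Real.pi * (F v - (v i)^4 - (v j)^4)
          + Real.pi * ((3/2)*((v i)^4 + (v j)^4) + 3*((v i)^2 * (v j)^2)) := by
    intro i j hij
    have : (fun θ => F (kacRot N i j θ v))
        = fun θ => (F v - (v i)^4 - (v j)^4)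
          + ((Real.cos θ * v i - Real.sin θ * v j)^4
            + (Real.sin θ * v i + Real.cos θ * v j)^4) := by
      funext θ; rw [hpt i j hij θ]
    rw [this, intervalIntegral.integral_add intervalIntegrable_const
      (by apply Continuous.intervalIntegrable; continuity),
      intervalIntegral.integral_const, kac_integral]
    rw [smul_eq_mul]
    ring
  set S := Finset.univ.filter (fun p : Fin N × Fin N => p.1 < p.2) with hS
  -- pair sums
  have hP1 : (∑ p ∈ S, ((v p.1)^4 + (v p.2)^4)) = ((N : ℝ) - 1) * T := by
    have h := pair_sum (fun i j => (v i)^4 + (v j)^4) (fun i j => by ring)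
    rw [← hS] at h
    have inner : ∀ i : Fin N, (∑ j : Fin N, ((v i)^4 + (v j)^4)) = (N:ℝ) * (v i)^4 + T := by
      intro i
      rw [Finset.sum_add_distrib, Finset.sum_const, Finset.card_univ, Fintype.card_fin,
        nsmul_eq_mul, ← hT]
    have e1 : (∑ i, ∑ j : Fin N, ((v i)^4 + (v j)^4)) = (N:ℝ) * T + (N:ℝ) * T := by
      rw [Finset.sum_congr rfl (fun i _ => inner i), Finset.sum_add_distrib,
        Finset.sum_const, Finset.card_univ, Fintype.card_fin, nsmul_eq_mul,
        ← Finset.mul_sum, ← hT]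
    have e2 : (∑ i : Fin N, ((v i)^4 + (v i)^4)) = T + T := by
      rw [Finset.sum_add_distrib, ← hT]
    rw [e1, e2] at h
    linarith
  have hP2 : (∑ p ∈ S, ((v p.1)^2 * (v p.2)^2)) = ((N : ℝ) * (N : ℝ) - T) / 2 := by
    have h := pair_sum (fun i j => (v i)^2 * (v j)^2) (fun i j => by ring)
    rw [← hS] at h
    have e1 : (∑ i, ∑ j : Fin N, (v i)^2 * (v j)^2) = (N:ℝ) * (N:ℝ) := by
      rw [← Finset.sum_mul_sum, hv]
    have e2 : (∑ i : Fin N, (v i)^2 * (v i)^2) = T := by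
      rw [hT]
      exact Finset.sum_congr rfl fun i _ => by ring
    rw [e1, e2] at h
    linarith
  have hcard' : ((S.card : ℕ) : ℝ) = ((N:ℝ) * (N:ℝ) - (N:ℝ)) / 2 := by
    have h := pair_sum (fun _ _ : Fin N => (1:ℝ)) (fun _ _ => rfl)
    rw [← hS] at h
    simp only [Finset.sum_const, Finset.card_univ, Fintype.card_fin, nsmul_eq_mul,
      mul_one] at h
    linarith
  -- value of choose
  have hchoose : ((N.choose 2 : ℕ) : ℝ) * 2 = (N : ℝ) * ((N : ℝ) - 1) := by
    have h2 : N.choose 2 * 2 = N * (N - 1) := by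
      rw [Nat.choose_two_right]
      exact Nat.div_mul_cancel (Nat.even_mul_pred_self N).two_dvd
    have := congrArg (fun n : ℕ => (n : ℝ)) h2
    push_cast [Nat.cast_sub (Nat.one_le_of_lt hN)] at this
    linarith
  have hchoose0 : ((N.choose 2 : ℕ) : ℝ) ≠ 0 := by
    have : 0 < (N:ℝ) * ((N:ℝ) - 1) := by
      have : (2:ℝ) ≤ (N:ℝ) := by exact_mod_cast hN
      nlinarith
    intro h; rw [h] at hchoose; linarith
  -- F v value
  have hFv : F v = T - (N : ℝ) * c := by
    rw [hF]; simp only [← hc, ← hT]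
    rw [Finset.sum_sub_distrib, Finset.sum_const, Finset.card_univ]
    simp
    rw [hT]
  -- compute kacQ
  have hQ : kacQ N F v = ((N.choose 2 : ℕ) : ℝ)⁻¹ *
      ((S.card : ℝ) * F v - (1/4) * (∑ p ∈ S, ((v p.1)^4 + (v p.2)^4))
        + (3/2) * (∑ p ∈ S, ((v p.1)^2 * (v p.2)^2))) := by
    rw [kacQ, ← hS]
    congr 1
    have hterm : ∀ p ∈ S, (2 * Real.pi)⁻¹ *
        (∫ θ in (-Real.pi)..Real.pi, F (kacRot N p.1 p.2 θ v))
        = F v - (1/4)*((v p.1)^4 + (v p.2)^4) + (3/2)*((v p.1)^2 * (v p.2)^2) := by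
      intro p hp
      have hlt : p.1 < p.2 := by
        have := hp
        rw [hS, Finset.mem_filter] at this
        exact this.2
      rw [hint p.1 p.2 (ne_of_lt hlt)]
      have hpi : Real.pi ≠ 0 := Real.pi_ne_zero
      field_simp
      ring
    rw [Finset.sum_congr rfl hterm, Finset.sum_add_distrib, Finset.sum_sub_distrib,
      Finset.sum_const, ← Finset.mul_sum, ← Finset.mul_sum, nsmul_eq_mul]
  rw [hQ, hFv]
  have hN1 : (N:ℝ) - 1 ≠ 0 := by
    have : (2:ℝ) ≤ (N:ℝ) := by exact_mod_cast hN
    intro h; linarith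
  have hN2 : (N:ℝ) + 2 ≠ 0 := by positivity
  have hNn : (N:ℝ) ≠ 0 := by
    have : (2:ℝ) ≤ (N:ℝ) := by exact_mod_cast hN
    intro h; linarith
  have hC : ((N.choose 2 : ℕ) : ℝ) = (N : ℝ) * ((N : ℝ) - 1) / 2 := by
    linarith [hchoose]
  rw [hP1, hP2, hcard', hC, hc]
  field_simp
  ring
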